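/- Let α, β ∈ ℝ∖{0} satisfy α^k β^l ≠ ±1 for all integers (k,l) ≠ (0,0), and let ρ : F₂ → GL(2,ℝ) be given by ρ(a) = [[α,0],[0,α⁻¹]], ρ(b) = [[β,1],[0,β⁻¹]]. Then for every word w of the form a^{±1}, a^{±2}, b^{±1}, a b^{-1} a^{-1} b^{-1}, a b^n, or a b^n a b^n (n ∈ ℤ), and every nonzero integer m, ρ(w^m) is not a scalar matrix. -/

import Mathlib

/-- The class of words of `F₂ = ⟨a,b⟩` representing simple closed curves on the
punctured Klein bottle (here `a = of 0`, `b = of 1`):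
`a^{±1}, a^{±2}, b^{±1}, ab⁻¹a⁻¹b⁻¹, ab^n, ab^n a b^n (n ∈ ℤ)`. -/
def SccWord (w : FreeGroup (Fin 2)) : Prop :=
  let a : FreeGroup (Fin 2) := FreeGroup.of 0
  let b : FreeGroup (Fin 2) := FreeGroup.of 1
  w = a ∨ w = a⁻¹ ∨ w = a ^ 2 ∨ w = a⁻¹ ^ 2 ∨ w = b ∨ w = b⁻¹ ∨
    w = a * b⁻¹ * a⁻¹ * b⁻¹ ∨
    (∃ n : ℤ, w = a * b ^ n ∨ w = a * b ^ n * a * b ^ n)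

private lemma key_entries (α β : ℝ) (hα : α ≠ 0) (hβ : β ≠ 0)
    (ρ : FreeGroup (Fin 2) →* Matrix.GeneralLinearGroup (Fin 2) ℝ)
    (ha : (ρ (FreeGroup.of 0) : Matrix (Fin 2) (Fin 2) ℝ) = !![α, 0; 0, α⁻¹])
    (hb : (ρ (FreeGroup.of 1) : Matrix (Fin 2) (Fin 2) ℝ) = !![β, 1; 0, β⁻¹])
    (ψ : FreeGroup (Fin 2) →* ℝˣ)
    (hψa : ψ (FreeGroup.of 0) = Units.mk0 α hα)
    (hψb : ψ (FreeGroup.of 1) = Units.mk0 β hβ) :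
    ∀ w : FreeGroup (Fin 2),
      (ρ w : Matrix (Fin 2) (Fin 2) ℝ) 1 0 = 0 ∧
      (ρ w : Matrix (Fin 2) (Fin 2) ℝ) 0 0 = (ψ w : ℝ) ∧
      (ρ w : Matrix (Fin 2) (Fin 2) ℝ) 1 1 = (((ψ w)⁻¹ : ℝˣ) : ℝ) := by
  have hpure : ∀ x : Fin 2, (pure x : FreeGroup (Fin 2)) = FreeGroup.of x := fun _ => rfl
  intro w
  induction w using FreeGroup.induction_on with
  | C1 => simp
  | of x =>
      rcases (by omega : x = 0 ∨ x = 1) with rfl | rfl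
      · rw [ha, hψa]; norm_num
      · rw [hb, hψb]; norm_num
  | inv_of x _ =>
      rcases (by omega : x = 0 ∨ x = 1) with rfl | rfl
      · have hinv : ((ρ ((FreeGroup.of (0 : Fin 2))⁻¹) : Matrix (Fin 2) (Fin 2) ℝ))
            = !![α⁻¹, 0; 0, α] := by
          rw [map_inv, Matrix.coe_units_inv, ha]
          apply Matrix.inv_eq_right_inv
          ext i j
          fin_cases i <;> fin_cases j <;>
            simp [Matrix.mul_apply, Fin.sum_univ_two, mul_inv_cancel₀ hα,
              inv_mul_cancel₀ hα, Matrix.one_apply]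
        rw [hinv, map_inv, hψa]; norm_num
      · have hinv : ((ρ ((FreeGroup.of (1 : Fin 2))⁻¹) : Matrix (Fin 2) (Fin 2) ℝ))
            = !![β⁻¹, -1; 0, β] := by
          rw [map_inv, Matrix.coe_units_inv, hb]
          apply Matrix.inv_eq_right_inv
          ext i j
          fin_cases i <;> fin_cases j <;>
            simp [Matrix.mul_apply, Fin.sum_univ_two, mul_inv_cancel₀ hβ,
              inv_mul_cancel₀ hβ, Matrix.one_apply]
        rw [hinv, map_inv, hψb]; norm_num
  | mul x y ihx ihy =>
      obtain ⟨hx10, hx00, hx11⟩ := ihx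
      obtain ⟨hy10, hy00, hy11⟩ := ihy
      have hmul : (ρ (x * y) : Matrix (Fin 2) (Fin 2) ℝ)
          = (ρ x : Matrix (Fin 2) (Fin 2) ℝ) * (ρ y : Matrix (Fin 2) (Fin 2) ℝ) := by
        rw [map_mul]; rfl
      rw [hmul]
      refine ⟨?_, ?_, ?_⟩
      · rw [Matrix.mul_apply, Fin.sum_univ_two, hx10, hy10]; ring
      · rw [Matrix.mul_apply, Fin.sum_univ_two, hx00, hy00, hy10, map_mul, Units.val_mul]; ring
      · rw [Matrix.mul_apply, Fin.sum_univ_two, hx10, hx11, hy11, map_mul, mul_inv,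
          Units.val_mul]; ring

/-- If `α^k β^l ≠ ±1` for all `(k,l) ≠ (0,0)`, then for every word `w` representing a
simple closed curve on the punctured Klein bottle and every nonzero integer `m`,
`ρ(w^m)` is not a scalar matrix. -/
theorem stmt_9 (α β : ℝ) (hα : α ≠ 0) (hβ : β ≠ 0)
    (h : ∀ k l : ℤ, ¬ (k = 0 ∧ l = 0) → α ^ k * β ^ l ≠ 1 ∧ α ^ k * β ^ l ≠ -1)
    (ρ : FreeGroup (Fin 2) →* Matrix.GeneralLinearGroup (Fin 2) ℝ)
    (ha : (ρ (FreeGroup.of 0) : Matrix (Fin 2) (Fin 2) ℝ) = !![α, 0; 0, α⁻¹])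
    (hb : (ρ (FreeGroup.of 1) : Matrix (Fin 2) (Fin 2) ℝ) = !![β, 1; 0, β⁻¹])
    (w : FreeGroup (Fin 2)) (hw : SccWord w) (m : ℤ) (hm : m ≠ 0) :
    ¬ ∃ c : ℝ, (ρ (w ^ m) : Matrix (Fin 2) (Fin 2) ℝ) = c • (1 : Matrix (Fin 2) (Fin 2) ℝ) := by
  rintro ⟨c, hc⟩
  set A : ℝˣ := Units.mk0 α hα with hA
  set B : ℝˣ := Units.mk0 β hβ with hB
  set ψ : FreeGroup (Fin 2) →* ℝˣ := FreeGroup.lift (fun i => if i = 0 then A else B) with hψ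
  have hψa : ψ (FreeGroup.of 0) = A := by simp [hψ]
  have hψb : ψ (FreeGroup.of 1) = B := by simp [hψ]
  obtain ⟨h10, h00, h11⟩ := key_entries α β hα hβ ρ ha hb ψ hψa hψb (w ^ m)
  set x : ℝ := (ψ (w ^ m) : ℝ) with hx
  have hxne : x ≠ 0 := Units.ne_zero _
  rw [hc] at h00 h11
  simp only [Matrix.smul_apply, Matrix.one_apply_eq, smul_eq_mul, mul_one] at h00 h11
  have e00 : x = c := h00.symm
  have e11 : x⁻¹ = c := by rw [← Units.val_inv_eq_inv_val, ← h11]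
  have hinvx : x⁻¹ = x := e11.trans e00.symm
  have hsq : x * x = 1 := by
    nth_rewrite 2 [← hinvx]
    exact mul_inv_cancel₀ hxne
  have hone : x = 1 ∨ x = -1 := mul_self_eq_one_iff.mp hsq
  obtain ⟨k, l, hkl, hval⟩ : ∃ k l : ℤ, ¬ (k = 0 ∧ l = 0) ∧ (ψ w : ℝ) = α ^ k * β ^ l := by
    have hbv : ∀ n : ℤ, ((ψ (FreeGroup.of 1 ^ n) : ℝˣ) : ℝ) = β ^ n := by
      intro n
      rw [map_zpow, hψb, Units.val_zpow_eq_zpow_val, hB, Units.val_mk0]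
    obtain hw|hw|hw|hw|hw|hw|hw|⟨n,hw|hw⟩ := hw
    · exact ⟨1, 0, by simp, by rw [hw, hψa, hA]; simp⟩
    · exact ⟨-1, 0, by simp, by rw [hw, map_inv, hψa, hA]; simp [zpow_neg]⟩
    · refine ⟨2, 0, by simp, ?_⟩
      rw [hw, map_pow, hψa, hA, Units.val_pow_eq_pow_val, Units.val_mk0]
      rw [show ((2:ℤ)) = ((2:ℕ) : ℤ) by norm_num, zpow_natCast]
      simp
    · refine ⟨-2, 0, by simp, ?_⟩
      rw [hw, map_pow, map_inv, hψa, hA, Units.val_pow_eq_pow_val,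
        Units.val_inv_eq_inv_val, Units.val_mk0]
      rw [show ((-2:ℤ)) = -((2:ℕ) : ℤ) by norm_num, zpow_neg, zpow_natCast]
      simp [inv_pow]
    · exact ⟨0, 1, by simp, by rw [hw, hψb, hB]; simp⟩
    · exact ⟨0, -1, by simp, by rw [hw, map_inv, hψb, hB]; simp [zpow_neg]⟩
    · refine ⟨0, -2, by simp, ?_⟩
      rw [hw]
      simp only [map_mul, map_inv, hψa, hψb, hA, hB, Units.val_mul,
        Units.val_inv_eq_inv_val, Units.val_mk0]
      rw [show ((-2:ℤ)) = -((2:ℕ) : ℤ) by norm_num, zpow_neg, zpow_natCast]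
      field_simp
    · refine ⟨1, n, by simp, ?_⟩
      rw [hw, map_mul, Units.val_mul, hψa, hA, Units.val_mk0, hbv, zpow_one]
    · refine ⟨2, 2 * n, by simp, ?_⟩
      rw [hw, map_mul, map_mul, map_mul, Units.val_mul, Units.val_mul, Units.val_mul,
        hψa, hA, Units.val_mk0, hbv,
        show (2:ℤ) * n = n + n by ring, zpow_add₀ hβ,
        show ((2:ℤ)) = 1 + 1 by norm_num, zpow_add₀ hα, zpow_one]
      generalize β ^ n = t
      ring
  have hxval : x = α ^ (k * m) * β ^ (l * m) := by
    rw [hx, map_zpow, Units.val_zpow_eq_zpow_val, hval, mul_zpow,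
      ← zpow_mul, ← zpow_mul]
  have hne : ¬ (k * m = 0 ∧ l * m = 0) := by
    rintro ⟨h1, h2⟩
    rcases mul_eq_zero.mp h1 with h1 | h1
    · rcases mul_eq_zero.mp h2 with h2 | h2
      · exact hkl ⟨h1, h2⟩
      · exact hm h2
    · exact hm h1
  obtain ⟨hne1, hne2⟩ := h (k * m) (l * m) hne
  rcases hone with h1 | h1
  · exact hne1 (hxval ▸ h1)
  · exact hne2 (hxval ▸ h1)
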